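/- Let G be a commutative group and n a positive integer, and let a = (a₁,…,aₙ) where a₁,…,aₙ: G → ℂ are linearly independent additive functions. Then the monomials a^α := ∏_{i=1}^{n} a_i^{α_i}, for distinct multi-indices α ∈ ℕ^n, are linearly independent over ℂ as functions on G. -/

import Mathlib

open MvPolynomial


lemma aux_eval_nat_zero : ∀ {n : ℕ} {p : MvPolynomial (Fin n) ℂ},
    (∀ k : Fin n → ℕ, eval (fun i => (k i : ℂ)) p = 0) → p = 0 := by
  intro n
  induction n with
  | zero =>
    intro p h
    have h0 := h finZeroElim
    rw [MvPolynomial.eq_C_of_isEmpty p, eval_C] at h0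
    rw [MvPolynomial.eq_C_of_isEmpty p, h0, map_zero]
  | succ n ih =>
    intro p h
    apply (finSuccEquiv ℂ n).injective
    simp only [map_zero]
    apply Polynomial.ext
    intro m
    rw [Polynomial.coeff_zero]
    apply ih
    intro s
    have hq : Polynomial.map (eval (fun i => (s i : ℂ))) (finSuccEquiv ℂ n p) = 0 := by
      apply Polynomial.eq_zero_of_infinite_isRoot
      apply Set.Infinite.mono (s := Set.range (Nat.cast : ℕ → ℂ))
      · rintro _ ⟨y, rfl⟩
        show Polynomial.IsRoot _ ((y : ℕ) : ℂ)
        have hcast : (fun i => ((Fin.cons (α := fun _ => ℕ) y s i : ℕ) : ℂ))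
            = Fin.cons (((y : ℕ) : ℂ)) (fun i => ((s i : ℕ) : ℂ)) := by
          funext i
          induction i using Fin.cases <;> simp
        have hy := h (Fin.cons y s)
        rw [hcast, eval_eq_eval_mv_eval'] at hy
        exact hy
      · exact Set.infinite_range_of_injective Nat.cast_injective
    have := congrArg (fun q => Polynomial.coeff q m) hq
    simpa [Polynomial.coeff_map] using this

lemma aux_span (n : ℕ) (H : AddSubgroup (Fin n → ℂ))
    (hspan : Submodule.span ℂ (H : Set (Fin n → ℂ)) = ⊤)
    (p : MvPolynomial (Fin n) ℂ) (hp : ∀ v ∈ H, eval v p = 0) : p = 0 := by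
  obtain ⟨b, hbH, hbsp, hbli⟩ := exists_linearIndependent ℂ (H : Set (Fin n → ℂ))
  rw [hspan] at hbsp
  have hfin : b.Finite := hbli.setFinite
  haveI := hfin.fintype
  let B : Module.Basis b ℂ (Fin n → ℂ) := Module.Basis.mk hbli (by rw [Subtype.range_coe, hbsp])
  have hcard : Fintype.card b = n := by
    rw [← Module.finrank_eq_card_basis B, Module.finrank_fin_fun]
  let e : b ≃ Fin n := Fintype.equivFinOfCardEq hcard
  let B' : Module.Basis (Fin n) ℂ (Fin n → ℂ) := B.reindex e
  have hB'H : ∀ i, B' i ∈ H := by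
    intro i
    have : B' i = ((e.symm i : b) : Fin n → ℂ) := by
      simp [B', B, Module.Basis.reindex_apply, Module.Basis.mk_apply]
    rw [this]
    exact hbH (e.symm i).2
  let f : Fin n → MvPolynomial (Fin n) ℂ := fun j => ∑ i, C (B' i j) * X i
  let q : MvPolynomial (Fin n) ℂ := aeval f p
  have haev : ∀ c : Fin 3 → ℂ, True := fun _ => trivial
  have hq : ∀ c : Fin n → ℂ, eval c q = eval (∑ i, c i • B' i) p := by
    intro c
    have h1 : aeval c (aeval f p) = aeval (fun j => aeval c (f j)) p := comp_aeval_apply _ _ _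
    have h2 : (fun j => aeval c (f j)) = (∑ i, c i • B' i : Fin n → ℂ) := by
      funext j
      simp only [f, map_sum, map_mul, aeval_C, aeval_X, algebraMap_eq]
      simp [Finset.sum_apply, mul_comm, eval_C]
    have h3 : ∀ (v : Fin n → ℂ) (r : MvPolynomial (Fin n) ℂ), aeval v r = eval v r := by
      intro v r; rw [← coe_aeval_eq_eval]; rfl
    rw [← h3, show q = aeval f p from rfl, h1, h2, h3]
  have h1 : ∀ k : Fin n → ℕ, eval (fun i => (k i : ℂ)) q = 0 := by
    intro k
    rw [hq]
    apply hp
    refine AddSubgroup.sum_mem _ (fun i _ => ?_)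
    rw [show ((k i : ℂ)) • B' i = k i • B' i from (Nat.cast_smul_eq_nsmul ℂ (k i) (B' i))]
    exact AddSubgroup.nsmul_mem _ (hB'H i) _
  have hq0 : q = 0 := aux_eval_nat_zero h1
  have hall : ∀ v : Fin n → ℂ, eval v p = 0 := by
    intro v
    have hv : ∑ i, (B'.repr v i) • B' i = v := B'.sum_repr v
    rw [← hv, ← hq, hq0, map_zero]
  exact MvPolynomial.funext fun x => by rw [hall x, map_zero]

/-- **Linear independence of monomials (Lemma 2.7 of Székelyhidi).**
Let `G` be a commutative group, `n` a positive integer, and `a₁,…,aₙ : G → ℂ` linearly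
independent additive functions (homomorphisms of `G` into `(ℂ, +)`).  Then the monomials
`a^α = ∏ i, a i ^ α i`, for distinct multi-indices `α ∈ ℕ^n`, are linearly independent
over `ℂ`. -/
theorem monomials_linear_independent
    {G : Type*} [CommGroup G] (n : ℕ) (hn : 0 < n)
    (a : Fin n → G → ℂ)
    (hadd : ∀ i, ∀ x y : G, a i (x * y) = a i x + a i y)
    (hind : LinearIndependent ℂ a) :
    LinearIndependent ℂ (fun α : Fin n → ℕ => fun x : G => ∏ i, a i x ^ α i) := by
  classical
  have ha1 : ∀ i, a i (1 : G) = 0 := by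
    intro i
    have h := hadd i 1 1
    rw [one_mul] at h
    exact (add_eq_left (a := a i 1)).mp h.symm
  let H : AddSubgroup (Fin n → ℂ) :=
  { carrier := Set.range fun x : G => fun i => a i x
    zero_mem' := ⟨1, funext fun i => ha1 i⟩
    add_mem' := by
      rintro _ _ ⟨x, rfl⟩ ⟨y, rfl⟩
      exact ⟨x * y, funext fun i => hadd i x y⟩
    neg_mem' := by
      rintro _ ⟨x, rfl⟩
      refine ⟨x⁻¹, funext fun i => ?_⟩
      have h := hadd i x x⁻¹
      rw [mul_inv_cancel, ha1] at h
      simpa [Pi.neg_apply] using (neg_eq_of_add_eq_zero_right h.symm).symm }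
  have hspan : Submodule.span ℂ (H : Set (Fin n → ℂ)) = ⊤ := by
    by_contra hne
    obtain ⟨f, hf0, hfbot⟩ := Submodule.exists_dual_map_eq_bot_of_lt_top
      (p := Submodule.span ℂ (H : Set (Fin n → ℂ))) (lt_top_iff_ne_top.mpr hne) inferInstance
    have hfH : ∀ x : G, f (fun i => a i x) = 0 := by
      intro x
      have hmem : (fun i => a i x) ∈ Submodule.span ℂ (H : Set (Fin n → ℂ)) :=
        Submodule.subset_span ⟨x, rfl⟩
      have : f (fun i => a i x) ∈ Submodule.map f (Submodule.span ℂ (H : Set (Fin n → ℂ))) :=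
        ⟨_, hmem, rfl⟩
      rw [hfbot] at this
      exact this
    set g : Fin n → ℂ := fun i => f (fun j => if i = j then 1 else 0) with hg_def
    have hg : ∀ i, g i = 0 := by
      apply Fintype.linearIndependent_iff.mp hind
      funext x
      have h1 := LinearMap.pi_apply_eq_sum_univ f (fun i => a i x)
      rw [hfH x] at h1
      simp only [Finset.sum_apply, Pi.smul_apply, smul_eq_mul, Pi.zero_apply]
      rw [show (∑ i, g i * a i x) = ∑ i, a i x • (f fun j => if i = j then 1 else 0) from
        Finset.sum_congr rfl fun i _ => mul_comm _ _, ← h1]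
    apply hf0
    apply LinearMap.ext
    intro v
    rw [LinearMap.pi_apply_eq_sum_univ f v]
    simp only [LinearMap.zero_apply]
    refine Finset.sum_eq_zero fun i _ => ?_
    rw [show f (fun j => if i = j then 1 else 0) = g i from rfl, hg i, smul_zero]
  rw [linearIndependent_iff]
  intro l hl
  let eemb : (Fin n → ℕ) → (Fin n →₀ ℕ) := fun α => Finsupp.equivFunOnFinite.symm α
  have heinj : Function.Injective eemb := Finsupp.equivFunOnFinite.symm.injective
  let P : MvPolynomial (Fin n) ℂ := ∑ α ∈ l.support, monomial (eemb α) (l α)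
  have hPev : ∀ x : G, eval (fun i => a i x) P = 0 := by
    intro x
    rw [Finsupp.linearCombination_apply] at hl
    have hl' := congrFun hl x
    simp only [Finsupp.sum, Finset.sum_apply, Pi.smul_apply, smul_eq_mul, Pi.zero_apply] at hl'
    rw [show P = ∑ α ∈ l.support, monomial (eemb α) (l α) from rfl, map_sum]
    rw [← hl']
    refine Finset.sum_congr rfl fun α _ => ?_
    rw [eval_monomial, Finsupp.prod_fintype _ _ (fun i => pow_zero _)]
    congr 1
  have hP0 : P = 0 := aux_span n H hspan P (by rintro _ ⟨x, rfl⟩; exact hPev x)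
  ext α
  simp only [Finsupp.coe_zero, Pi.zero_apply]
  have hc : MvPolynomial.coeff (eemb α) P = l α := by
    rw [show P = ∑ α ∈ l.support, monomial (eemb α) (l α) from rfl, coeff_sum]
    have hcong : ∀ β ∈ l.support,
        MvPolynomial.coeff (eemb α) (monomial (eemb β) (l β)) = if β = α then l β else 0 := by
      intro β _
      rw [coeff_monomial]
      by_cases hβ : β = α
      · subst hβ; simp
      · rw [if_neg (fun h => hβ (heinj h)), if_neg hβ]
    rw [Finset.sum_congr rfl hcong, Finset.sum_ite_eq' l.support α (fun β => l β)]
    split_ifs with h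
    · rfl
    · exact (Finsupp.notMem_support_iff.mp h).symm
  rw [← hc, hP0, MvPolynomial.coeff_zero]
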